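/- Let l ≥ 1 be an integer and define T_l(λ) = Σ_{n≥1} n^l λ^n/(1−λ^n) for 0 < λ < 1. Then as λ → 1⁻, T_l(λ) is asymptotic to l!·ζ(l+1)/(1−λ)^{l+1}; that is, (1−λ)^{l+1}·T_l(λ) tends to l!·ζ(l+1) as λ → 1⁻, where ζ denotes the Riemann zeta function. -/

import Mathlib

open Filter Set Finset

private lemma aux_summable_S {x : ℝ} (hx : |x| < 1) (l : ℕ) :
    Summable (fun n : ℕ => ((n : ℝ) + 1) ^ l * x ^ (n + 1)) := by
  have h := summable_pow_mul_geometric_of_norm_lt_one (k := l) (r := x)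
    (by rwa [Real.norm_eq_abs])
  have h2 := (summable_nat_add_iff 1).2 h
  refine h2.congr fun n => ?_
  push_cast
  ring

private lemma aux_choose_le (n l : ℕ) :
    ((n : ℝ) + 1) ^ l ≤ (l.factorial : ℝ) * ((n + l).choose l) := by
  have h : (n+1) ^ l ≤ l.factorial * ((n + l).choose l) := by
    calc (n+1) ^ l ≤ (n+1).ascFactorial l := Nat.pow_succ_le_ascFactorial (n+1) l
      _ = l.factorial * ((n + l).choose l) := Nat.ascFactorial_eq_factorial_mul_choose n l
  exact_mod_cast h

private lemma aux_le_choose (n l : ℕ) :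
    (l.factorial : ℝ) * ((n+1).choose l) ≤ ((n : ℝ) + 1) ^ l := by
  have h : l.factorial * ((n+1).choose l) ≤ (n+1) ^ l := by
    calc l.factorial * ((n+1).choose l) = (n+1).descFactorial l :=
          (Nat.descFactorial_eq_factorial_mul_choose _ _).symm
      _ ≤ (n+1) ^ l := Nat.descFactorial_le_pow _ _
  exact_mod_cast h

private lemma aux_upper {x : ℝ} (hx0 : 0 ≤ x) (hx : x < 1) (l : ℕ) :
    ∑' n : ℕ, ((n : ℝ) + 1) ^ l * x ^ (n + 1)
      ≤ (l.factorial : ℝ) * x / (1 - x) ^ (l + 1) := by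
  have hax : |x| < 1 := by rwa [abs_of_nonneg hx0]
  have hc : HasSum (fun n : ℕ => ((l.factorial : ℝ) * ((n + l).choose l)) * x ^ (n+1))
      ((l.factorial : ℝ) * x / (1-x)^(l+1)) := by
    have h := (hasSum_choose_mul_geometric_of_norm_lt_one l (r := x)
      (by rwa [Real.norm_eq_abs])).mul_left ((l.factorial : ℝ) * x)
    rw [show (l.factorial : ℝ) * x * (1/(1-x)^(l+1)) = (l.factorial : ℝ) * x/(1-x)^(l+1)
      by ring] at h
    exact h.congr_fun fun n => by rw [pow_succ]; ring
  calc ∑' n : ℕ, ((n : ℝ) + 1) ^ l * x ^ (n + 1)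
      ≤ ∑' n : ℕ, ((l.factorial : ℝ) * ((n + l).choose l)) * x ^ (n+1) := by
        refine Summable.tsum_le_tsum (fun n => ?_) (aux_summable_S hax l) hc.summable
        exact mul_le_mul_of_nonneg_right (aux_choose_le n l) (by positivity)
    _ = _ := hc.tsum_eq

private lemma aux_lower {x : ℝ} (hx0 : 0 ≤ x) (hx : x < 1) {l : ℕ} (hl : 1 ≤ l) :
    (l.factorial : ℝ) * x ^ l / (1 - x) ^ (l + 1)
      ≤ ∑' n : ℕ, ((n : ℝ) + 1) ^ l * x ^ (n + 1) := by
  have hax : |x| < 1 := by rwa [abs_of_nonneg hx0]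
  set f : ℕ → ℝ := fun m => (m.choose l : ℝ) * x ^ m with hf
  have h1 : HasSum f (x ^ l * (1 / (1-x)^(l+1))) := by
    have h := (hasSum_choose_mul_geometric_of_norm_lt_one l (r := x)
      (by rwa [Real.norm_eq_abs])).mul_left (x ^ l)
    have hinj : Function.Injective (fun n : ℕ => n + l) := add_left_injective l
    rw [← Function.Injective.hasSum_iff hinj ?_]
    · refine h.congr_fun fun n => ?_
      simp only [hf, Function.comp]
      rw [pow_add]; ring
    · intro m hm
      have hml : m < l := by
        by_contra hc
        exact hm ⟨m - l, by show m - l + l = m; omega⟩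
      simp [hf, Nat.choose_eq_zero_of_lt hml]
  have h2 : HasSum (fun n : ℕ => f (n+1)) (x ^ l * (1 / (1-x)^(l+1))) := by
    have := (hasSum_nat_add_iff' (f := f) 1).2 h1
    simpa [hf, Nat.choose_eq_zero_of_lt hl] using this
  have h3 : HasSum (fun n : ℕ => (l.factorial : ℝ) * ((n+1).choose l) * x ^ (n+1))
      ((l.factorial : ℝ) * x ^ l / (1-x)^(l+1)) := by
    have h := h2.mul_left (l.factorial : ℝ)
    rw [show (l.factorial : ℝ) * (x^l * (1/(1-x)^(l+1))) = (l.factorial : ℝ) * x^l/(1-x)^(l+1)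
      by ring] at h
    exact h.congr_fun fun n => by simp only [hf]; ring
  calc (l.factorial : ℝ) * x ^ l / (1 - x) ^ (l + 1)
      = ∑' n : ℕ, (l.factorial : ℝ) * ((n+1).choose l) * x ^ (n+1) := h3.tsum_eq.symm
    _ ≤ ∑' n : ℕ, ((n : ℝ) + 1) ^ l * x ^ (n + 1) := by
        refine Summable.tsum_le_tsum (fun n => ?_) h3.summable (aux_summable_S hax l)
        exact mul_le_mul_of_nonneg_right (aux_le_choose n l) (by positivity)


private lemma aux_tendsto_helper (l k : ℕ) (hl : 1 ≤ l)
    (aux_lower : ∀ {x : ℝ}, 0 ≤ x → x < 1 →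
      (l.factorial : ℝ) * x ^ l / (1 - x) ^ (l + 1)
        ≤ ∑' n : ℕ, ((n : ℝ) + 1) ^ l * x ^ (n + 1))
    (aux_upper : ∀ {x : ℝ}, 0 ≤ x → x < 1 →
      ∑' n : ℕ, ((n : ℝ) + 1) ^ l * x ^ (n + 1)
        ≤ (l.factorial : ℝ) * x / (1 - x) ^ (l + 1)) :
    Tendsto (fun lam : ℝ => (1-lam)^(l+1) * ∑' n : ℕ, ((n:ℝ)+1)^l * (lam^(k+1))^(n+1))
      (nhdsWithin 1 (Set.Ioo 0 1))
      (nhds ((l.factorial : ℝ) / ((k:ℝ)+1)^(l+1))) := by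
  set K := k + 1 with hK
  set P : ℝ → ℝ := fun lam => ∑ j ∈ Finset.range K, lam^j with hP
  set Q : ℝ → ℝ := fun lam => (1-lam^K)^(l+1) * ∑' n : ℕ, ((n:ℝ)+1)^l * (lam^K)^(n+1) with hQ
  have hfac : ∀ lam ∈ Set.Ioo (0:ℝ) 1, 1 - lam^K = (1-lam) * P lam := by
    intro lam _
    have h := geom_sum_mul lam K
    simp only [hP]
    nlinarith [h]
  have hPpos : ∀ lam ∈ Set.Ioo (0:ℝ) 1, 0 < P lam := by
    intro lam hlam
    refine Finset.sum_pos (fun j _ => pow_pos hlam.1 j) ⟨0, by simp [hK]⟩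
  -- eventual equality
  have heq : ∀ lam ∈ Set.Ioo (0:ℝ) 1,
      (1-lam)^(l+1) * ∑' n : ℕ, ((n:ℝ)+1)^l * (lam^K)^(n+1)
        = ((P lam)⁻¹)^(l+1) * Q lam := by
    intro lam hlam
    have h1 : (1 : ℝ) - lam = (1 - lam^K) * (P lam)⁻¹ := by
      rw [hfac lam hlam, mul_assoc, mul_inv_cancel₀ (hPpos lam hlam).ne', mul_one]
    rw [hQ]
    calc (1-lam)^(l+1) * ∑' n : ℕ, ((n:ℝ)+1)^l * (lam^K)^(n+1)
        = ((1 - lam^K) * (P lam)⁻¹)^(l+1) * ∑' n : ℕ, ((n:ℝ)+1)^l * (lam^K)^(n+1) := by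
          rw [← h1]
      _ = ((P lam)⁻¹)^(l+1) * ((1-lam^K)^(l+1) * ∑' n : ℕ, ((n:ℝ)+1)^l * (lam^K)^(n+1)) := by
          rw [mul_pow]; ring
  -- limit of first factor
  have hPlim : Tendsto (fun lam : ℝ => ((P lam)⁻¹)^(l+1)) (nhdsWithin 1 (Set.Ioo 0 1))
      (nhds (((K:ℝ)⁻¹)^(l+1))) := by
    have hc : Tendsto P (nhds 1) (nhds (K:ℝ)) := by
      have : Continuous P := by
        simp only [hP]; exact continuous_finset_sum _ (fun j _ => continuous_pow j)
      have h1 : P 1 = (K:ℝ) := by simp [hP]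
      simpa [h1] using this.tendsto 1
    exact ((hc.mono_left nhdsWithin_le_nhds).inv₀ (by positivity)).pow (l+1)
  -- squeeze for Q
  have hQlim : Tendsto Q (nhdsWithin 1 (Set.Ioo 0 1)) (nhds (l.factorial : ℝ)) := by
    have hlo : Tendsto (fun lam : ℝ => (l.factorial : ℝ) * (lam^K)^l)
        (nhdsWithin 1 (Set.Ioo 0 1)) (nhds (l.factorial : ℝ)) := by
      have : Continuous (fun lam : ℝ => (l.factorial : ℝ) * (lam^K)^l) := by continuity
      simpa using (this.tendsto 1).mono_left nhdsWithin_le_nhds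
    have hhi : Tendsto (fun lam : ℝ => (l.factorial : ℝ) * lam^K)
        (nhdsWithin 1 (Set.Ioo 0 1)) (nhds (l.factorial : ℝ)) := by
      have : Continuous (fun lam : ℝ => (l.factorial : ℝ) * lam^K) := by continuity
      simpa using (this.tendsto 1).mono_left nhdsWithin_le_nhds
    refine tendsto_of_tendsto_of_tendsto_of_le_of_le' hlo hhi ?_ ?_
    · filter_upwards [self_mem_nhdsWithin] with lam hlam
      have hx0 : (0:ℝ) ≤ lam^K := le_of_lt (pow_pos hlam.1 K)
      have hx1 : lam^K < 1 := pow_lt_one₀ hlam.1.le hlam.2 (Nat.succ_ne_zero k)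
      have hne : (0:ℝ) < (1 - lam^K)^(l+1) := pow_pos (by linarith) _
      have h := aux_lower hx0 hx1
      have := mul_le_mul_of_nonneg_left h hne.le
      rw [hQ]
      calc (l.factorial : ℝ) * (lam^K)^l
          = (1-lam^K)^(l+1) * ((l.factorial : ℝ) * (lam^K)^l / (1 - lam^K)^(l+1)) := by
            field_simp
        _ ≤ _ := this
    · filter_upwards [self_mem_nhdsWithin] with lam hlam
      have hx0 : (0:ℝ) ≤ lam^K := le_of_lt (pow_pos hlam.1 K)
      have hx1 : lam^K < 1 := pow_lt_one₀ hlam.1.le hlam.2 (Nat.succ_ne_zero k)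
      have hne : (0:ℝ) < (1 - lam^K)^(l+1) := pow_pos (by linarith) _
      have h := aux_upper hx0 hx1
      have := mul_le_mul_of_nonneg_left h hne.le
      rw [hQ]
      calc (1-lam^K)^(l+1) * ∑' n : ℕ, ((n:ℝ)+1)^l * (lam^K)^(n+1)
          ≤ (1-lam^K)^(l+1) * ((l.factorial : ℝ) * lam^K / (1 - lam^K)^(l+1)) := this
        _ = (l.factorial : ℝ) * lam^K := by field_simp
  have hmain := hPlim.mul hQlim
  have hval : ((K:ℝ)⁻¹)^(l+1) * (l.factorial : ℝ) = (l.factorial : ℝ) / ((k:ℝ)+1)^(l+1) := by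
    have : ((K:ℝ)) = (k:ℝ)+1 := by push_cast [hK]; ring
    rw [this]
    field_simp
    rw [← mul_pow, one_div, inv_mul_cancel₀ (by positivity), one_pow]
  rw [hval] at hmain
  refine hmain.congr' ?_
  filter_upwards [self_mem_nhdsWithin] with lam hlam
  exact (heq lam hlam).symm


private lemma aux_bound (l : ℕ)
    (aux_upper : ∀ {x : ℝ}, 0 ≤ x → x < 1 →
      ∑' n : ℕ, ((n : ℝ) + 1) ^ l * x ^ (n + 1)
        ≤ (l.factorial : ℝ) * x / (1 - x) ^ (l + 1))
    (aux_nonneg : ∀ {x : ℝ}, 0 ≤ x → 0 ≤ ∑' n : ℕ, ((n : ℝ) + 1) ^ l * x ^ (n + 1))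
    (lam : ℝ) (hlam : lam ∈ Set.Ioo (0:ℝ) 1) (k : ℕ) :
    |(1-lam)^(l+1) * ∑' n : ℕ, ((n:ℝ)+1)^l * (lam^(k+1))^(n+1)|
      ≤ ((l.factorial : ℝ) * 3^(l+1) * (l+1).factorial) / ((k:ℝ)+1)^(l+1) := by
  obtain ⟨hlam0, hlam1⟩ := hlam
  set t : ℝ := 1 - lam with ht
  have ht0 : 0 < t := by simp [ht]; linarith
  have ht1 : t < 1 := by simp [ht]; linarith
  set K : ℕ := k + 1 with hKdef
  have hKR : ((K:ℝ)) = (k:ℝ) + 1 := by push_cast [hKdef]; ring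
  have hKpos : (0:ℝ) < K := by rw [hKR]; positivity
  set x : ℝ := lam ^ K with hx
  have hx0 : 0 ≤ x := le_of_lt (pow_pos hlam0 K)
  have hx1 : x < 1 := pow_lt_one₀ hlam0.le hlam1 (Nat.succ_ne_zero k)
  have hxexp : x ≤ Real.exp (-(K * t)) := by
    have h1 : lam ≤ Real.exp (-t) := by
      have := Real.add_one_le_exp (-t)
      simp [ht] at this ⊢
      linarith
    calc x = lam ^ K := hx
      _ ≤ (Real.exp (-t)) ^ K := pow_le_pow_left₀ hlam0.le h1 K
      _ = Real.exp (-(K * t)) := by rw [← Real.exp_nat_mul]; ring_nf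
  -- core upper bound : g ≤ l! * x * (t/(1-x))^(l+1)
  have hg : |(1-lam)^(l+1) * ∑' n : ℕ, ((n:ℝ)+1)^l * (lam^K)^(n+1)|
      ≤ (l.factorial : ℝ) * x * (t/(1-x))^(l+1) := by
    rw [abs_of_nonneg (mul_nonneg (by positivity) (aux_nonneg hx0))]
    have h := aux_upper hx0 hx1
    have h2 := mul_le_mul_of_nonneg_left h (le_of_lt (pow_pos ht0 (l+1)))
    calc (1-lam)^(l+1) * ∑' n : ℕ, ((n:ℝ)+1)^l * (lam^K)^(n+1)
        = t^(l+1) * ∑' n : ℕ, ((n:ℝ)+1)^l * x^(n+1) := by rw [← ht, ← hx]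
      _ ≤ t^(l+1) * ((l.factorial : ℝ) * x / (1-x)^(l+1)) := h2
      _ = (l.factorial : ℝ) * x * (t/(1-x))^(l+1) := by
          rw [div_pow]
          field_simp
  rcases le_or_gt ((K:ℝ) * t) 1 with hcase | hcase
  · -- small case : 1 - x ≥ K t / 3
    have hexp3 : Real.exp (-((K:ℝ)*t)) ≤ 1 - (K:ℝ)*t/3 := by
      set s : ℝ := (K:ℝ) * t with hs
      have hs0 : 0 ≤ s := by positivity
      have h1 : s * Real.exp (-s) ≤ 1 - Real.exp (-s) := by
        have h2 := Real.add_one_le_exp s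
        have h3 : Real.exp (-s) > 0 := Real.exp_pos _
        have h4 : (s + 1) * Real.exp (-s) ≤ Real.exp s * Real.exp (-s) :=
          mul_le_mul_of_nonneg_right h2 h3.le
        rw [← Real.exp_add] at h4
        simp at h4
        nlinarith
      have h5 : (1:ℝ)/3 ≤ Real.exp (-s) := by
        have := Real.exp_one_gt_d9
        have h6 : Real.exp (-1) ≤ Real.exp (-s) := Real.exp_le_exp.2 (by linarith)
        have h7 : Real.exp (-1) = 1 / Real.exp 1 := by rw [Real.exp_neg]; ring
        have h8 : Real.exp 1 ≤ 3 := by nlinarith [Real.exp_one_lt_d9]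
        have h9 : (1:ℝ)/3 ≤ 1 / Real.exp 1 := by
          apply one_div_le_one_div_of_le (by positivity) h8
        linarith
      nlinarith
    have h1x : (K:ℝ)*t/3 ≤ 1 - x := by
      have := hxexp.trans hexp3
      linarith
    have hdiv : t/(1-x) ≤ 3/(K:ℝ) := by
      rw [div_le_div_iff₀ (by linarith [h1x, mul_pos hKpos ht0] : (0:ℝ) < 1 - x) hKpos]
      nlinarith
    calc |(1-lam)^(l+1) * ∑' n : ℕ, ((n:ℝ)+1)^l * (lam^(k+1))^(n+1)|
        ≤ (l.factorial : ℝ) * x * (t/(1-x))^(l+1) := hg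
      _ ≤ (l.factorial : ℝ) * 1 * (3/(K:ℝ))^(l+1) := by
          have h1xpos : (0:ℝ) < 1 - x := lt_of_lt_of_le (by positivity) h1x
          have hr0 : (0:ℝ) ≤ t/(1-x) := div_nonneg ht0.le h1xpos.le
          apply mul_le_mul
          · exact mul_le_mul_of_nonneg_left hx1.le (by positivity)
          · exact pow_le_pow_left₀ hr0 hdiv _
          · exact pow_nonneg hr0 _
          · positivity
      _ = ((l.factorial : ℝ) * 3^(l+1)) / ((K:ℝ))^(l+1) := by
          rw [div_pow]; ring
      _ ≤ ((l.factorial : ℝ) * 3^(l+1) * (l+1).factorial) / ((k:ℝ)+1)^(l+1) := by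
          rw [← hKR]
          have h1 : (1:ℝ) ≤ ((l+1).factorial : ℝ) := by
            exact_mod_cast Nat.one_le_iff_ne_zero.2 (Nat.factorial_ne_zero _)
          gcongr ?_ / _
          nlinarith [mul_le_mul_of_nonneg_left h1
            (show (0:ℝ) ≤ (l.factorial : ℝ) * 3^(l+1) by positivity)]
  · -- big case : K t ≥ 1
    have hhalf : (1:ℝ)/2 ≤ 1 - x := by
      have h2 : Real.exp (-((K:ℝ)*t)) ≤ Real.exp (-1) := Real.exp_le_exp.2 (by linarith)
      have h2e : (2:ℝ) ≤ Real.exp 1 := by nlinarith [Real.exp_one_gt_d9]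
      have h3 : Real.exp (-1) ≤ 1/2 := by
        rw [Real.exp_neg]
        have := inv_anti₀ (by norm_num : (0:ℝ) < 2) h2e
        simpa [one_div] using this
      linarith [hxexp]
    have hdiv : t/(1-x) ≤ 2*t := by
      rw [div_le_iff₀ (by linarith)]
      nlinarith
    have hexpbound : Real.exp (-((K:ℝ)*t)) * ((K:ℝ)*t)^(l+1) ≤ ((l+1).factorial : ℝ) := by
      have := Real.pow_div_factorial_le_exp (x := (K:ℝ)*t) (mul_pos hKpos ht0).le (l+1)
      rw [div_le_iff₀ (by positivity : (0:ℝ) < ((l+1).factorial:ℝ))] at this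
      have he : Real.exp (-((K:ℝ)*t)) = (Real.exp ((K:ℝ)*t))⁻¹ := by
        rw [Real.exp_neg]
      rw [he]
      rw [inv_mul_le_iff₀ (Real.exp_pos _)]
      linarith [this]
    calc |(1-lam)^(l+1) * ∑' n : ℕ, ((n:ℝ)+1)^l * (lam^(k+1))^(n+1)|
        ≤ (l.factorial : ℝ) * x * (t/(1-x))^(l+1) := hg
      _ ≤ (l.factorial : ℝ) * Real.exp (-((K:ℝ)*t)) * (2*t)^(l+1) := by
          have h1xpos : (0:ℝ) < 1 - x := by linarith
          have hr0 : (0:ℝ) ≤ t/(1-x) := div_nonneg ht0.le h1xpos.le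
          apply mul_le_mul
          · exact mul_le_mul_of_nonneg_left hxexp (by positivity)
          · exact pow_le_pow_left₀ hr0 hdiv _
          · exact pow_nonneg hr0 _
          · positivity
      _ = (l.factorial : ℝ) * 2^(l+1) * (Real.exp (-((K:ℝ)*t)) * ((K:ℝ)*t)^(l+1)) / ((K:ℝ))^(l+1) := by
          have hKne : ((K:ℝ))^(l+1) ≠ 0 := by positivity
          rw [mul_pow, mul_pow, eq_div_iff hKne]
          ring
      _ ≤ ((l.factorial : ℝ) * 3^(l+1) * (l+1).factorial) / ((k:ℝ)+1)^(l+1) := by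
          rw [← hKR]
          gcongr ?_ / _
          calc (l.factorial : ℝ) * 2^(l+1) * (Real.exp (-((K:ℝ)*t)) * ((K:ℝ)*t)^(l+1))
              ≤ (l.factorial : ℝ) * 2^(l+1) * ((l+1).factorial : ℝ) := by
                apply mul_le_mul_of_nonneg_left hexpbound (by positivity)
            _ ≤ (l.factorial : ℝ) * 3^(l+1) * ((l+1).factorial : ℝ) := by
                have h23 : (2:ℝ)^(l+1) ≤ 3^(l+1) := pow_le_pow_left₀ (by norm_num) (by norm_num) _
                have hf0 : (0:ℝ) ≤ ((l+1).factorial : ℝ) := by positivity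
                have hl0 : (0:ℝ) ≤ (l.factorial : ℝ) := by positivity
                exact mul_le_mul_of_nonneg_right (mul_le_mul_of_nonneg_left h23 hl0) hf0

private lemma aux_rewrite (l : ℕ) (lam : ℝ) (hlam : lam ∈ Set.Ioo (0:ℝ) 1) :
    (1 - lam) ^ (l + 1) * ∑' n : ℕ, ((n : ℝ) + 1) ^ l * lam ^ (n + 1) / (1 - lam ^ (n + 1))
      = ∑' k : ℕ, (1-lam)^(l+1) * ∑' n : ℕ, ((n:ℝ)+1)^l * (lam^(k+1))^(n+1) := by
  obtain ⟨hlam0, hlam1⟩ := hlam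
  set F : ℕ → ℕ → ℝ := fun n k => ((n:ℝ)+1)^l * (lam^(n+1))^(k+1) with hF
  have hy : ∀ n : ℕ, 0 < lam ^ (n+1) ∧ lam ^ (n+1) < 1 := fun n =>
    ⟨pow_pos hlam0 _, pow_lt_one₀ hlam0.le hlam1 (Nat.succ_ne_zero n)⟩
  have h_geom : ∀ n : ℕ, HasSum (fun k => F n k)
      (((n:ℝ)+1)^l * lam^(n+1) / (1 - lam^(n+1))) := by
    intro n
    have h := (hasSum_geometric_of_lt_one (hy n).1.le (hy n).2).mul_left
      (((n:ℝ)+1)^l * lam^(n+1))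
    rw [show ((n:ℝ)+1)^l * lam^(n+1) * (1 - lam^(n+1))⁻¹
      = ((n:ℝ)+1)^l * lam^(n+1) / (1 - lam^(n+1)) by rw [div_eq_mul_inv]] at h
    refine h.congr_fun fun k => ?_
    simp only [hF]
    rw [pow_succ]
    ring
  have hsum_outer : Summable (fun n : ℕ => ((n:ℝ)+1)^l * lam^(n+1) / (1 - lam^(n+1))) := by
    have hS := (aux_summable_S (x := lam) (by rw [abs_of_nonneg hlam0.le]; exact hlam1) l)
    refine Summable.of_nonneg_of_le (fun n => ?_) (fun n => ?_) (hS.mul_left (1/(1-lam)))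
    · have h2 : (0:ℝ) < 1 - lam^(n+1) := by linarith [(hy n).2]
      exact div_nonneg (mul_nonneg (by positivity) (pow_pos hlam0 _).le) h2.le
    · have h1 : 1 - lam ≤ 1 - lam^(n+1) := by
        have : lam^(n+1) ≤ lam := by
          calc lam^(n+1) ≤ lam^1 := pow_le_pow_of_le_one hlam0.le hlam1.le (by omega)
            _ = lam := pow_one lam
        linarith
      rw [div_le_iff₀ (by linarith [(hy n).2] : (0:ℝ) < 1 - lam^(n+1))]
      rw [one_div, mul_comm (1-lam)⁻¹, mul_assoc]
      have h2 : (1:ℝ) ≤ (1-lam)⁻¹ * (1-lam^(n+1)) := by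
        rw [← div_eq_inv_mul, le_div_iff₀ (by linarith)]
        linarith
      nlinarith [mul_nonneg (pow_nonneg (by positivity : (0:ℝ) ≤ (n:ℝ)+1) l)
        (pow_pos hlam0 (n+1)).le]
  have hsumF : Summable (Function.uncurry F) := by
    rw [summable_prod_of_nonneg]
    · constructor
      · exact fun n => (h_geom n).summable
      · refine hsum_outer.congr fun n => ?_
        exact (h_geom n).tsum_eq.symm
    · intro p
      have := (hy p.1).1
      simp only [Function.uncurry, hF]
      positivity
  calc (1 - lam) ^ (l + 1) * ∑' n : ℕ, ((n : ℝ) + 1) ^ l * lam ^ (n + 1) / (1 - lam ^ (n + 1))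
      = (1 - lam) ^ (l + 1) * ∑' n : ℕ, ∑' k : ℕ, F n k := by
        congr 1
        exact tsum_congr fun n => (h_geom n).tsum_eq.symm
    _ = (1 - lam) ^ (l + 1) * ∑' k : ℕ, ∑' n : ℕ, F n k := by
        rw [Summable.tsum_comm hsumF]
    _ = ∑' k : ℕ, (1-lam)^(l+1) * ∑' n : ℕ, ((n:ℝ)+1)^l * (lam^(k+1))^(n+1) := by
        rw [← tsum_mul_left]
        refine tsum_congr fun k => ?_
        congr 1
        refine tsum_congr fun n => ?_
        simp only [hF]
        rw [← pow_mul, ← pow_mul, Nat.mul_comm]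

private lemma aux_nonneg_S (l : ℕ) {x : ℝ} (hx : 0 ≤ x) :
    0 ≤ ∑' n : ℕ, ((n : ℝ) + 1) ^ l * x ^ (n + 1) :=
  tsum_nonneg fun n => by positivity

/-- For `l ≥ 1`, `T_l(λ) = Σ_{n≥1} n^l λ^n/(1−λ^n)` is asymptotic to
`l!·ζ(l+1)/(1−λ)^{l+1}` as `λ → 1⁻`. -/
theorem stmt8 (l : ℕ) (hl : 1 ≤ l) :
    Filter.Tendsto (fun lam : ℝ =>
        (1 - lam) ^ (l + 1) * ∑' n : ℕ, ((n : ℝ) + 1) ^ l * lam ^ (n + 1) / (1 - lam ^ (n + 1)))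
      (nhdsWithin 1 (Set.Ioo 0 1))
      (nhds ((Nat.factorial l : ℝ) * ∑' n : ℕ, 1 / ((n : ℝ) + 1) ^ (l + 1))) := by
  have hps : Summable (fun k : ℕ => 1 / ((k:ℝ)+1)^(l+1)) := by
    have h := (Real.summable_one_div_nat_pow (p := l+1)).2 (by omega)
    have h2 := (summable_nat_add_iff 1).2 h
    refine h2.congr fun k => ?_
    push_cast
    ring
  have hbound : Summable (fun k : ℕ =>
      ((l.factorial : ℝ) * 3^(l+1) * (l+1).factorial) / ((k:ℝ)+1)^(l+1)) := by
    refine (hps.mul_left ((l.factorial : ℝ) * 3^(l+1) * (l+1).factorial)).congr fun k => ?_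
    rw [mul_one_div]
  have hab : ∀ k : ℕ, Filter.Tendsto
      (fun lam : ℝ => (1-lam)^(l+1) * ∑' n : ℕ, ((n:ℝ)+1)^l * (lam^(k+1))^(n+1))
      (nhdsWithin 1 (Set.Ioo 0 1)) (nhds ((l.factorial : ℝ) / ((k:ℝ)+1)^(l+1))) :=
    fun k => aux_tendsto_helper l k hl (fun h1 h2 => aux_lower h1 h2 hl)
      (fun h1 h2 => aux_upper h1 h2 l)
  have hmain := tendsto_tsum_of_dominated_convergence
    (f := fun (lam : ℝ) (k : ℕ) =>
      (1-lam)^(l+1) * ∑' n : ℕ, ((n:ℝ)+1)^l * (lam^(k+1))^(n+1))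
    (g := fun k : ℕ => (l.factorial : ℝ) / ((k:ℝ)+1)^(l+1))
    hbound hab ?_
  · have hval : ∑' k : ℕ, (l.factorial : ℝ) / ((k:ℝ)+1)^(l+1)
        = (l.factorial : ℝ) * ∑' n : ℕ, 1 / ((n : ℝ) + 1) ^ (l + 1) := by
      rw [← tsum_mul_left]
      exact tsum_congr fun k => by rw [mul_one_div]
    rw [hval] at hmain
    refine hmain.congr' ?_
    filter_upwards [self_mem_nhdsWithin] with lam hlam
    exact (aux_rewrite l lam hlam).symm
  · filter_upwards [self_mem_nhdsWithin] with lam hlam k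
    rw [Real.norm_eq_abs]
    exact aux_bound l (fun h1 h2 => aux_upper h1 h2 l) (fun h => aux_nonneg_S l h) lam hlam k
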